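/- Fix positive integers n, d, w, an indexed set Q = {q₁,…,q_ℓ, p₁,…,p_m} of polynomials on n pairs of twin variables, and a cut-off function c for Q. Let i ∈ [n], let Q₀ and Q₁ be the extensions of Q with the additional equality constraint p_{m+1} = x_i and p_{m+1} = x̄_i respectively, and let c' be the extension of c mapping the new index m+1 to 1. Then: (i) if Q₀ ⊢^{c'}_{w,2d} −1 ≥ 0, then E(x_i) > 0 for every E ∈ ℰ^c_{w,2d}(Q); (ii) if Q₁ ⊢^{c'}_{w,2d} −1 ≥ 0, then E(x̄_i) > 0 for every E ∈ ℰ^c_{w,2d}(Q). -/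

import Mathlib

open MvPolynomial

noncomputable section

/-- The polynomial ring in `n` pairs of twin variables: `Sum.inl i` is the basic
variable `xᵢ` and `Sum.inr i` is its twin `x̄ᵢ`. -/
abbrev MvPoly (n : ℕ) : Type := MvPolynomial (Fin n ⊕ Fin n) ℝ

/-- The Boolean axioms `xᵢ² − xᵢ`, `x̄ᵢ² − x̄ᵢ` and `xᵢ + x̄ᵢ − 1`. -/
def boolAxiom (n : ℕ) (a : Fin 3 × Fin n) : MvPoly n :=
  if a.1 = 0 then X (Sum.inl a.2) ^ 2 - X (Sum.inl a.2)
  else if a.1 = 1 then X (Sum.inr a.2) ^ 2 - X (Sum.inr a.2)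
  else X (Sum.inl a.2) + X (Sum.inr a.2) - 1

/-- The sum of squares of a list of polynomials. -/
def sosOf {n : ℕ} (l : List (MvPoly n)) : MvPoly n := (l.map (· ^ 2)).sum

/-- A Positivstellensatz proof of `goal ≥ 0` from the inequality constraints
`q j ≥ 0` (`j : Fin ℓ`) and the equality constraints `p j = 0` (`j : Fin m`),
on `n` pairs of twin variables. -/
structure PSProof (n ℓ m : ℕ) (q : Fin ℓ → MvPoly n) (p : Fin m → MvPoly n)
    (goal : MvPoly n) : Type where
  Js : Finset (Finset (Fin ℓ))
  empty_not_mem : ∅ ∉ Js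
  r0 : List (MvPoly n)
  r : Finset (Fin ℓ) → List (MvPoly n)
  t : Fin m → MvPoly n
  u : Fin 3 × Fin n → MvPoly n
  identity : goal = sosOf r0 + ∑ J ∈ Js, sosOf (r J) * ∏ j ∈ J, q j
      + ∑ j, t j * p j + ∑ a, u a * boolAxiom n a

namespace PSProof

variable {n ℓ m : ℕ} {q : Fin ℓ → MvPoly n} {p : Fin m → MvPoly n} {goal : MvPoly n}

/-- The proof has product-width at most `w`. -/
def widthLE (π : PSProof n ℓ m q p goal) (w : ℕ) : Prop := ∀ J ∈ π.Js, J.card ≤ w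

/-- The proof has degree at most `d` (the zero polynomial having degree `−∞`). -/
def degreeLE (π : PSProof n ℓ m q p goal) (d : ℕ) : Prop :=
  goal.totalDegree ≤ d ∧ (sosOf π.r0).totalDegree ≤ d ∧
  (∀ J ∈ π.Js, sosOf (π.r J) ≠ 0 →
    (sosOf (π.r J)).totalDegree + ∑ j ∈ J, (q j).totalDegree ≤ d) ∧
  (∀ j, π.t j ≠ 0 → (π.t j).totalDegree + (p j).totalDegree ≤ d)

/-- The monomial size of the proof: the total number of monomials of the `r` and `t`
polynomials. -/
def size (π : PSProof n ℓ m q p goal) : ℕ :=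
  (π.r0.map fun r => r.support.card).sum
  + ∑ J ∈ π.Js, ((π.r J).map fun r => r.support.card).sum
  + ∑ j, (π.t j).support.card

end PSProof

/-- A cut-off function for the system `q, p`. -/
def IsCutoff {n ℓ m : ℕ} (q : Fin ℓ → MvPoly n) (p : Fin m → MvPoly n)
    (c : Finset (Fin ℓ) ⊕ Fin m → ℕ) : Prop :=
  (∀ J : Finset (Fin ℓ), ∑ j ∈ J, (q j).totalDegree ≤ c (Sum.inl J)) ∧
  (∀ j : Fin m, (p j).totalDegree ≤ c (Sum.inr j))

/-- The proof has degree mod `c` at most `d`. -/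
def PSProof.degreeModLE {n ℓ m : ℕ} {q : Fin ℓ → MvPoly n} {p : Fin m → MvPoly n}
    {goal : MvPoly n} (π : PSProof n ℓ m q p goal)
    (c : Finset (Fin ℓ) ⊕ Fin m → ℕ) (d : ℕ) : Prop :=
  goal.totalDegree ≤ d ∧ (sosOf π.r0).totalDegree ≤ d ∧
  (∀ J ∈ π.Js, sosOf (π.r J) ≠ 0 → (sosOf (π.r J)).totalDegree + c (Sum.inl J) ≤ d) ∧
  (∀ j, π.t j ≠ 0 → (π.t j).totalDegree + c (Sum.inr j) ≤ d)

/-- `PS^c_{w,d}(Q)`: polynomials of degree at most `d` with a PS proof of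
degree mod `c` at most `d` and product-width at most `w`.  `Q ⊢^c_{w,d} a ≥ b`
is expressed as `a - b ∈ PScone …`. -/
def PScone (n ℓ m : ℕ) (q : Fin ℓ → MvPoly n) (p : Fin m → MvPoly n)
    (c : Finset (Fin ℓ) ⊕ Fin m → ℕ) (w d : ℕ) : Set (MvPoly n) :=
  {g | g.totalDegree ≤ d ∧ ∃ π : PSProof n ℓ m q p g, π.degreeModLE c d ∧ π.widthLE w}

/-- `ℰ^c_{w,d}(Q)`: pseudo-expectations, i.e. linear functionals on the space of
polynomials of degree at most `d` sending `1` to `1` and the cone to nonnegatives. -/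
def PseudoExp (n ℓ m : ℕ) (q : Fin ℓ → MvPoly n) (p : Fin m → MvPoly n)
    (c : Finset (Fin ℓ) ⊕ Fin m → ℕ) (w d : ℕ) :
    Set ((restrictTotalDegree (Fin n ⊕ Fin n) ℝ d) →ₗ[ℝ] ℝ) :=
  {E | (∀ g : restrictTotalDegree (Fin n ⊕ Fin n) ℝ d, (g : MvPoly n) = 1 → E g = 1) ∧
    (∀ g : restrictTotalDegree (Fin n ⊕ Fin n) ℝ d,
      (g : MvPoly n) ∈ PScone n ℓ m q p c w d → 0 ≤ E g)}

namespace Statement6Aux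

/-- The Boolean ideal. -/
def bIdeal (n : ℕ) : Ideal (MvPoly n) := Ideal.span (Set.range (boolAxiom n))

variable {n : ℕ}

lemma sqX_mem (v : Fin n ⊕ Fin n) : (X v : MvPoly n) ^ 2 - X v ∈ bIdeal n := by
  cases v with
  | inl j =>
    have h : boolAxiom n ((0 : Fin 3), j) = (X (Sum.inl j) : MvPoly n) ^ 2 - X (Sum.inl j) := by
      simp [boolAxiom]
    exact h ▸ Ideal.subset_span ⟨((0 : Fin 3), j), h⟩
  | inr j =>
    have h : boolAxiom n ((1 : Fin 3), j) = (X (Sum.inr j) : MvPoly n) ^ 2 - X (Sum.inr j) := by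
      simp [boolAxiom]
    exact h ▸ Ideal.subset_span ⟨((1 : Fin 3), j), h⟩

local notation "mkQ" => Ideal.Quotient.mk (bIdeal n)

lemma z_sq (v : Fin n ⊕ Fin n) : (mkQ (X v)) ^ 2 = mkQ (X v) := by
  have h : mkQ ((X v : MvPoly n) ^ 2 - X v) = 0 := Ideal.Quotient.eq_zero_iff_mem.2 (sqX_mem v)
  rw [map_sub, map_pow, sub_eq_zero] at h
  exact h

lemma z_pow (v : Fin n ⊕ Fin n) {k : ℕ} (hk : 1 ≤ k) : (mkQ (X v)) ^ k = mkQ (X v) := by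
  induction k with
  | zero => omega
  | succ k ih =>
    rcases Nat.eq_or_lt_of_le hk with h | h
    · simp [← h]
    · have hk1 : 1 ≤ k := by omega
      rw [pow_succ, ih hk1, ← pow_two, z_sq]

lemma zprod_idem (T : Finset (Fin n ⊕ Fin n)) :
    (∏ v ∈ T, mkQ (X v)) ^ 2 = ∏ v ∈ T, mkQ (X v) := by
  rw [← Finset.prod_pow]
  exact Finset.prod_congr rfl fun v _ => z_sq v

lemma zprod_union (A B : Finset (Fin n ⊕ Fin n)) :
    (∏ v ∈ A, mkQ (X v)) * ∏ v ∈ B, mkQ (X v) = ∏ v ∈ A ∪ B, mkQ (X v) := by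
  classical
  rw [← Finset.prod_union_inter]
  have hsub : A ∩ B ⊆ A ∪ B := (Finset.inter_subset_left).trans Finset.subset_union_left
  rw [← Finset.prod_sdiff hsub]
  have h2 := zprod_idem (n := n) (A ∩ B)
  rw [pow_two] at h2
  rw [mul_assoc, h2]

lemma zmono (μ : (Fin n ⊕ Fin n) →₀ ℕ) :
    mkQ (monomial μ (1 : ℝ)) = ∏ v ∈ μ.support, mkQ (X v) := by
  rw [monomial_eq, map_one, one_mul]
  rw [Finsupp.prod, map_prod]
  exact Finset.prod_congr rfl fun v hv => by
    rw [map_pow]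
    exact z_pow v (Nat.one_le_iff_ne_zero.2 (Finsupp.mem_support_iff.1 hv))

lemma deg_prodX (T : Finset (Fin n ⊕ Fin n)) :
    (∏ v ∈ T, (X v : MvPoly n)).totalDegree ≤ T.card := by
  refine (totalDegree_finset_prod T _).trans ?_
  have : ∀ v ∈ T, (X v : MvPoly n).totalDegree = 1 := fun v _ => totalDegree_X v
  rw [Finset.sum_congr rfl this, Finset.sum_const, smul_eq_mul, mul_one]

end Statement6Aux
namespace Statement6Aux

variable {n ℓ m : ℕ} {q : Fin ℓ → MvPoly n} {p : Fin m → MvPoly n}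
  {c : Finset (Fin ℓ) ⊕ Fin m → ℕ} {w D : ℕ}

lemma sosOf_nil : sosOf ([] : List (MvPoly n)) = 0 := rfl

lemma sosOf_single (h : MvPoly n) : sosOf [h] = h ^ 2 := by simp [sosOf]

lemma ideal_mem_cone {g : MvPoly n} (hg : g ∈ bIdeal n) (hdeg : g.totalDegree ≤ D) :
    g ∈ PScone n ℓ m q p c w D := by
  obtain ⟨u, hu⟩ := Ideal.mem_span_range_iff_exists_fun.1 hg
  refine ⟨hdeg, ⟨∅, Finset.notMem_empty _, [], fun _ => [], fun _ => 0, u, ?_⟩, ?_, ?_⟩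
  · simp [sosOf_nil, hu]
  · refine ⟨hdeg, by simp [sosOf_nil], fun J hJ => absurd hJ (Finset.notMem_empty _),
      fun j hj => absurd rfl hj⟩
  · exact fun J hJ => absurd hJ (Finset.notMem_empty _)

lemma sq_mem_cone {h : MvPoly n} (hdeg : (h ^ 2).totalDegree ≤ D) :
    h ^ 2 ∈ PScone n ℓ m q p c w D := by
  refine ⟨hdeg, ⟨∅, Finset.notMem_empty _, [h], fun _ => [], fun _ => 0, fun _ => 0, ?_⟩, ?_, ?_⟩
  · simp [sosOf_single]
  · refine ⟨hdeg, by simpa [sosOf_single] using hdeg,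
      fun J hJ => absurd hJ (Finset.notMem_empty _), fun j hj => absurd rfl hj⟩
  · exact fun J hJ => absurd hJ (Finset.notMem_empty _)

open Classical in
/-- Evaluation of a linear functional on the degree-`D` truncation, extended by `0`. -/
def Ev (E : restrictTotalDegree (Fin n ⊕ Fin n) ℝ D →ₗ[ℝ] ℝ) (g : MvPoly n) : ℝ :=
  if h : g ∈ restrictTotalDegree (Fin n ⊕ Fin n) ℝ D then E ⟨g, h⟩ else 0

variable (E : restrictTotalDegree (Fin n ⊕ Fin n) ℝ D →ₗ[ℝ] ℝ)

lemma mem_M_of_deg {g : MvPoly n} (h : g.totalDegree ≤ D) :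
    g ∈ restrictTotalDegree (Fin n ⊕ Fin n) ℝ D :=
  (mem_restrictTotalDegree _ _ _).2 h

lemma Ev_of_mem {g : MvPoly n} (h : g ∈ restrictTotalDegree (Fin n ⊕ Fin n) ℝ D) :
    Ev E g = E ⟨g, h⟩ := by unfold Ev; rw [dif_pos h]

lemma Ev_zero : Ev E (0 : MvPoly n) = 0 := by
  rw [Ev_of_mem E (zero_mem _)]
  exact map_zero E

lemma Ev_add {g₁ g₂ : MvPoly n} (h₁ : g₁ ∈ restrictTotalDegree (Fin n ⊕ Fin n) ℝ D)
    (h₂ : g₂ ∈ restrictTotalDegree (Fin n ⊕ Fin n) ℝ D) :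
    Ev E (g₁ + g₂) = Ev E g₁ + Ev E g₂ := by
  rw [Ev_of_mem E h₁, Ev_of_mem E h₂, Ev_of_mem E (add_mem h₁ h₂)]
  have : (⟨g₁ + g₂, add_mem h₁ h₂⟩ : restrictTotalDegree (Fin n ⊕ Fin n) ℝ D)
      = ⟨g₁, h₁⟩ + ⟨g₂, h₂⟩ := rfl
  rw [this, map_add]

lemma Ev_smul (r : ℝ) {g : MvPoly n} (h : g ∈ restrictTotalDegree (Fin n ⊕ Fin n) ℝ D) :
    Ev E (r • g) = r * Ev E g := by
  rw [Ev_of_mem E h, Ev_of_mem E (Submodule.smul_mem _ r h)]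
  have : (⟨r • g, Submodule.smul_mem _ r h⟩ : restrictTotalDegree (Fin n ⊕ Fin n) ℝ D)
      = r • ⟨g, h⟩ := rfl
  rw [this, map_smul, smul_eq_mul]

lemma Ev_sub {g₁ g₂ : MvPoly n} (h₁ : g₁ ∈ restrictTotalDegree (Fin n ⊕ Fin n) ℝ D)
    (h₂ : g₂ ∈ restrictTotalDegree (Fin n ⊕ Fin n) ℝ D) :
    Ev E (g₁ - g₂) = Ev E g₁ - Ev E g₂ := by
  have : g₁ - g₂ = g₁ + (-1 : ℝ) • g₂ := by rw [neg_one_smul]; ring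
  rw [this, Ev_add E h₁ (Submodule.smul_mem _ _ h₂), Ev_smul E _ h₂]
  ring

lemma Ev_sum {α : Type*} (s : Finset α) (f : α → MvPoly n)
    (h : ∀ x ∈ s, f x ∈ restrictTotalDegree (Fin n ⊕ Fin n) ℝ D) :
    Ev E (∑ x ∈ s, f x) = ∑ x ∈ s, Ev E (f x) := by
  classical
  induction s using Finset.induction_on with
  | empty => simp [Ev_zero E]
  | insert _ _ hx ih =>
    rename_i a s
    rw [Finset.sum_insert hx, Finset.sum_insert hx,
      Ev_add E (h a (Finset.mem_insert_self a s))
        (sum_mem fun x hxs => h x (Finset.mem_insert_of_mem hxs)),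
      ih fun x hxs => h x (Finset.mem_insert_of_mem hxs)]

variable {E}

lemma Ev_nonneg (hE : E ∈ PseudoExp n ℓ m q p c w D) {g : MvPoly n}
    (hg : g ∈ PScone n ℓ m q p c w D) : 0 ≤ Ev E g := by
  have hm := mem_M_of_deg (n := n) hg.1
  rw [Ev_of_mem E hm]
  exact hE.2 ⟨g, hm⟩ hg

lemma Ev_one (hE : E ∈ PseudoExp n ℓ m q p c w D) : Ev E (1 : MvPoly n) = 1 := by
  have hm : (1 : MvPoly n) ∈ restrictTotalDegree (Fin n ⊕ Fin n) ℝ D :=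
    mem_M_of_deg (by simp [totalDegree_one])
  rw [Ev_of_mem E hm]
  exact hE.1 ⟨1, hm⟩ rfl

lemma Ev_congr (hE : E ∈ PseudoExp n ℓ m q p c w D) {g₁ g₂ : MvPoly n}
    (h₁ : g₁.totalDegree ≤ D) (h₂ : g₂.totalDegree ≤ D)
    (hmk : Ideal.Quotient.mk (bIdeal n) g₁ = Ideal.Quotient.mk (bIdeal n) g₂) :
    Ev E g₁ = Ev E g₂ := by
  have hid : g₁ - g₂ ∈ bIdeal n := Ideal.Quotient.eq.1 hmk
  have hid' : g₂ - g₁ ∈ bIdeal n := by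
    have := neg_mem hid; rwa [neg_sub] at this
  have hd : (g₁ - g₂).totalDegree ≤ D := (totalDegree_sub g₁ g₂).trans (max_le h₁ h₂)
  have hd' : (g₂ - g₁).totalDegree ≤ D := (totalDegree_sub g₂ g₁).trans (max_le h₂ h₁)
  have e1 := Ev_nonneg hE (ideal_mem_cone (q := q) (p := p) (c := c) (w := w) hid hd)
  have e2 := Ev_nonneg hE (ideal_mem_cone (q := q) (p := p) (c := c) (w := w) hid' hd')
  rw [Ev_sub E (mem_M_of_deg h₁) (mem_M_of_deg h₂)] at e1
  rw [Ev_sub E (mem_M_of_deg h₂) (mem_M_of_deg h₁)] at e2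
  linarith

lemma Ev_sq_nonneg (hE : E ∈ PseudoExp n ℓ m q p c w D) {f : MvPoly n}
    (hf : 2 * f.totalDegree ≤ D) : 0 ≤ Ev E (f ^ 2) :=
  Ev_nonneg hE (sq_mem_cone ((totalDegree_pow f 2).trans hf))

end Statement6Aux
namespace Statement6Aux

variable {n ℓ m : ℕ} {q : Fin ℓ → MvPoly n} {p : Fin m → MvPoly n}
  {c : Finset (Fin ℓ) ⊕ Fin m → ℕ} {w D : ℕ}
  {E : restrictTotalDegree (Fin n ⊕ Fin n) ℝ D →ₗ[ℝ] ℝ}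

/-- If `E(f²) = 0` then `E(fg) = 0`, for `f, g` of degree at most `e` with `2e ≤ D`. -/
lemma CS0 (hE : E ∈ PseudoExp n ℓ m q p c w D) {f g : MvPoly n} {e : ℕ}
    (hf : f.totalDegree ≤ e) (hg : g.totalDegree ≤ e) (he : e + e ≤ D)
    (hf2 : Ev E (f ^ 2) = 0) : Ev E (f * g) = 0 := by
  have hmf2 : (f ^ 2).totalDegree ≤ D :=
    (totalDegree_pow f 2).trans (by omega)
  have hmg2 : (g ^ 2).totalDegree ≤ D :=
    (totalDegree_pow g 2).trans (by omega)
  have hmfg : (f * g).totalDegree ≤ D :=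
    (totalDegree_mul f g).trans (le_trans (add_le_add hf hg) he)
  have key : ∀ a : ℝ, 0 ≤ 2 * a * Ev E (f * g) + Ev E (g ^ 2) := by
    intro a
    have hdeg : (a • f + g).totalDegree ≤ e :=
      (totalDegree_add _ _).trans (max_le ((totalDegree_smul_le a f).trans hf) hg)
    have h0 : 0 ≤ Ev E ((a • f + g) ^ 2) :=
      Ev_sq_nonneg hE (by omega : 2 * (a • f + g).totalDegree ≤ D)
    have hexp : (a • f + g) ^ 2 = (a * a) • f ^ 2 + ((2 * a) • (f * g) + g ^ 2) := by
      simp only [smul_eq_C_mul, map_mul, map_pow, map_ofNat]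
      ring
    rw [hexp, Ev_add E (Submodule.smul_mem _ _ (mem_M_of_deg hmf2))
        (add_mem (Submodule.smul_mem _ _ (mem_M_of_deg hmfg)) (mem_M_of_deg hmg2)),
      Ev_smul E _ (mem_M_of_deg hmf2),
      Ev_add E (Submodule.smul_mem _ _ (mem_M_of_deg hmfg)) (mem_M_of_deg hmg2),
      Ev_smul E _ (mem_M_of_deg hmfg), hf2] at h0
    linarith
  by_contra hne
  have ha : 2 * (-(Ev E (g ^ 2) + 1) / (2 * Ev E (f * g))) * Ev E (f * g)
      = -(Ev E (g ^ 2) + 1) := by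
    field_simp
  have := key (-(Ev E (g ^ 2) + 1) / (2 * Ev E (f * g)))
  rw [ha] at this
  linarith

/-- `E` vanishes on the multilinear monomial `x_{v₀} ∏_{v ∈ S} x_v` whenever
`|S| + 1 ≤ d` and `E(x_{v₀}) = 0`. -/
lemma F_zero {d : ℕ} (hDd : D = 2 * d) (hd : 0 < d)
    (hE : E ∈ PseudoExp n ℓ m q p c w D) (v₀ : Fin n ⊕ Fin n)
    (hX0 : Ev E (X v₀ : MvPoly n) = 0) :
    ∀ S : Finset (Fin n ⊕ Fin n), S.card + 1 ≤ d →
      Ev E (∏ v ∈ insert v₀ S, (X v : MvPoly n)) = 0 := by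
  classical
  intro S
  induction S using Finset.induction_on with
  | empty => intro _; simpa using hX0
  | insert _ _ ha ih =>
    rename_i a S
    intro hcard
    rw [Finset.card_insert_of_notMem ha] at hcard
    have hS : S.card + 1 ≤ d := by omega
    have hFS := ih hS
    by_cases hav : a = v₀
    · subst hav
      rw [Finset.insert_comm, Finset.insert_idem]
      exact ih (by omega)
    · have hanotin : a ∉ insert v₀ S := by
        simp [Finset.mem_insert, ha, hav]
      rw [Finset.insert_comm, Finset.prod_insert hanotin, mul_comm]
      have hdegF : (∏ v ∈ insert v₀ S, (X v : MvPoly n)).totalDegree ≤ d :=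
        (deg_prodX _).trans ((Finset.card_insert_le _ _).trans (by omega))
      have hf2 : Ev E ((∏ v ∈ insert v₀ S, (X v : MvPoly n)) ^ 2)
          = Ev E (∏ v ∈ insert v₀ S, (X v : MvPoly n)) := by
        refine Ev_congr hE ((totalDegree_pow _ 2).trans (by omega)) (by omega) ?_
        rw [map_pow, map_prod]
        exact zprod_idem _
      exact CS0 hE hdegF ((totalDegree_X a).le.trans hd) (by omega) (hf2.trans hFS)

end Statement6Aux
namespace Statement6Aux

variable {n ℓ m : ℕ} {q : Fin ℓ → MvPoly n} {p : Fin m → MvPoly n}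
  {c : Finset (Fin ℓ) ⊕ Fin m → ℕ} {w D : ℕ}
  {E : restrictTotalDegree (Fin n ⊕ Fin n) ℝ D →ₗ[ℝ] ℝ}

local notation "mkQ" => Ideal.Quotient.mk (bIdeal n)

lemma mono_zero {d : ℕ} (hDd : D = 2 * d) (hd : 0 < d)
    (hE : E ∈ PseudoExp n ℓ m q p c w D) (v₀ : Fin n ⊕ Fin n)
    (hX0 : Ev E (X v₀ : MvPoly n) = 0) (μ : (Fin n ⊕ Fin n) →₀ ℕ)
    (hμ : (μ.sum fun _ e => e) + 1 ≤ 2 * d) :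
    Ev E (monomial μ (1 : ℝ) * X v₀) = 0 := by
  classical
  set T := μ.support with hT
  have hcardT : T.card ≤ μ.sum fun _ e => e := by
    rw [Finsupp.sum]
    calc T.card = ∑ v ∈ T, 1 := by rw [Finset.sum_const, smul_eq_mul, mul_one]
    _ ≤ ∑ v ∈ T, μ v := Finset.sum_le_sum fun v hv =>
        Nat.one_le_iff_ne_zero.2 (Finsupp.mem_support_iff.1 hv)
  obtain ⟨T₁, hT₁sub, hT₁card⟩ := Finset.exists_subset_card_eq
    (le_trans (min_le_right _ _) le_rfl : min (d - 1) T.card ≤ T.card)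
  set T₂ := T \ T₁ with hT₂
  have hT₂card : T₂.card = T.card - T₁.card := Finset.card_sdiff_of_subset hT₁sub
  have hc1 : T₁.card + 1 ≤ d := by omega
  have hc2 : T₂.card ≤ d := by omega
  set f := ∏ v ∈ insert v₀ T₁, (X v : MvPoly n) with hf
  set g := ∏ v ∈ T₂, (X v : MvPoly n) with hg
  have hdegf : f.totalDegree ≤ d :=
    (deg_prodX _).trans ((Finset.card_insert_le _ _).trans hc1)
  have hdegg : g.totalDegree ≤ d := (deg_prodX _).trans hc2
  -- E(f²) = E(f) = 0
  have hf2 : Ev E (f ^ 2) = Ev E f := by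
    refine Ev_congr hE ((totalDegree_pow _ 2).trans (by omega)) (by omega) ?_
    rw [map_pow, map_prod]
    exact zprod_idem _
  have hfz : Ev E f = 0 := F_zero hDd hd hE v₀ hX0 T₁ hc1
  have hfg : Ev E (f * g) = 0 := CS0 hE hdegf hdegg (by omega) (hf2.trans hfz)
  -- the monomial is congruent to f*g mod the Boolean ideal
  have hcong : Ev E (monomial μ (1 : ℝ) * X v₀) = Ev E (f * g) := by
    refine Ev_congr hE ?_ ?_ ?_
    · refine (totalDegree_mul _ _).trans ?_
      rw [totalDegree_monomial μ (one_ne_zero (α := ℝ)), totalDegree_X]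
      omega
    · exact (totalDegree_mul _ _).trans (by omega)
    · rw [map_mul, map_mul, zmono, map_prod, map_prod, ← hT]
      have h1 : (∏ v ∈ T, mkQ (X v)) * mkQ (X v₀) = ∏ v ∈ insert v₀ T, mkQ (X v) := by
        rw [← Finset.prod_singleton (f := fun v => mkQ (X v)) v₀, zprod_union,
          Finset.union_comm, ← Finset.insert_eq]
      have h2 : (∏ v ∈ insert v₀ T₁, mkQ (X v)) * ∏ v ∈ T₂, mkQ (X v)
          = ∏ v ∈ insert v₀ T, mkQ (X v) := by
        rw [zprod_union]
        congr 1
        rw [Finset.insert_union, Finset.union_sdiff_of_subset hT₁sub]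
      rw [h1, h2]
  rw [hcong, hfg]

end Statement6Aux
namespace Statement6Aux

variable {n ℓ m : ℕ} {q : Fin ℓ → MvPoly n} {p : Fin m → MvPoly n}
  {c : Finset (Fin ℓ) ⊕ Fin m → ℕ} {w D : ℕ}
  {E : restrictTotalDegree (Fin n ⊕ Fin n) ℝ D →ₗ[ℝ] ℝ}

lemma deg_neg_one : ((-1 : MvPoly n)).totalDegree = 0 := by
  rw [show ((-1 : MvPoly n)) = -(1 : MvPoly n) by ring, totalDegree_neg, totalDegree_one]

/-- Extraction: from a width-`w` refutation of the extended system, a width-`w` proof of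
`-1 - t·x_{v₀} ≥ 0` in the original system. -/
lemma extract (v₀ : Fin n ⊕ Fin n)
    {c' : Finset (Fin ℓ) ⊕ Fin (m + 1) → ℕ}
    (hc'l : ∀ J : Finset (Fin ℓ), c' (Sum.inl J) = c (Sum.inl J))
    (hc'r : ∀ j : Fin m, c' (Sum.inr j.castSucc) = c (Sum.inr j))
    (hc'new : c' (Sum.inr (Fin.last m)) = 1)
    (π : PSProof n ℓ (m + 1) q (Fin.snoc p (X v₀)) (-1))
    (hπd : π.degreeModLE c' D) (hπw : π.widthLE w) :
    (-1 - π.t (Fin.last m) * X v₀ : MvPoly n) ∈ PScone n ℓ m q p c w D := by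
  have hid := π.identity
  rw [Fin.sum_univ_castSucc] at hid
  simp only [Fin.snoc_castSucc, Fin.snoc_last] at hid
  have ht : π.t (Fin.last m) ≠ 0 → (π.t (Fin.last m)).totalDegree + 1 ≤ D := by
    intro h
    have := hπd.2.2.2 (Fin.last m) h
    rwa [hc'new] at this
  have hgoaldeg : (-1 - π.t (Fin.last m) * X v₀ : MvPoly n).totalDegree ≤ D := by
    by_cases h : π.t (Fin.last m) = 0
    · rw [h, zero_mul, sub_zero, deg_neg_one]
      exact Nat.zero_le _
    · refine (totalDegree_sub _ _).trans (max_le ?_ ?_)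
      · rw [deg_neg_one]; exact Nat.zero_le _
      · refine (totalDegree_mul _ _).trans ?_
        rw [totalDegree_X]
        exact ht h
  refine ⟨hgoaldeg,
    ⟨π.Js, π.empty_not_mem, π.r0, π.r, fun j => π.t j.castSucc, π.u, ?_⟩,
    ⟨hgoaldeg, hπd.2.1, ?_, ?_⟩, ?_⟩
  · linear_combination hid
  · intro J hJ hne
    have := hπd.2.2.1 J hJ hne
    rwa [hc'l J] at this
  · intro j hj
    have := hπd.2.2.2 j.castSucc hj
    rwa [hc'r j] at this
  · exact hπw

/-- The main lemma: a refutation of the system extended with `x_{v₀} = 0` forces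
every pseudo-expectation of the original system to give `x_{v₀}` positive value. -/
lemma main {d : ℕ} (hDd : D = 2 * d) (hd : 0 < d) (v₀ : Fin n ⊕ Fin n)
    {c' : Finset (Fin ℓ) ⊕ Fin (m + 1) → ℕ}
    (hc'l : ∀ J : Finset (Fin ℓ), c' (Sum.inl J) = c (Sum.inl J))
    (hc'r : ∀ j : Fin m, c' (Sum.inr j.castSucc) = c (Sum.inr j))
    (hc'new : c' (Sum.inr (Fin.last m)) = 1)
    (href : (-1 : MvPoly n) ∈ PScone n ℓ (m + 1) q (Fin.snoc p (X v₀)) c' w D)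
    (hE : E ∈ PseudoExp n ℓ m q p c w D) :
    0 < Ev E (X v₀ : MvPoly n) := by
  have hdegX : (X v₀ : MvPoly n).totalDegree ≤ D := by rw [totalDegree_X]; omega
  have hXnn : 0 ≤ Ev E (X v₀ : MvPoly n) := by
    have hsq : Ev E ((X v₀ : MvPoly n) ^ 2) = Ev E (X v₀ : MvPoly n) := by
      refine Ev_congr hE ((totalDegree_pow _ 2).trans (by rw [totalDegree_X]; omega))
        hdegX ?_
      rw [map_pow]
      exact z_sq v₀
    rw [← hsq]
    exact Ev_sq_nonneg hE (by rw [totalDegree_X]; omega)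
  rcases hXnn.lt_or_eq with hpos | heq
  · exact hpos
  exfalso
  have hX0 : Ev E (X v₀ : MvPoly n) = 0 := heq.symm
  obtain ⟨hdeg1, π, hπd, hπw⟩ := href
  set t := π.t (Fin.last m) with htdef
  have hcone := extract v₀ hc'l hc'r hc'new π hπd hπw
  have h0 := Ev_nonneg hE hcone
  have ht : t ≠ 0 → t.totalDegree + 1 ≤ D := by
    intro h
    have := hπd.2.2.2 (Fin.last m) h
    rwa [hc'new] at this
  have htXdeg : (t * X v₀).totalDegree ≤ D := by
    by_cases h : t = 0
    · rw [h, zero_mul, totalDegree_zero]; exact Nat.zero_le _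
    · refine (totalDegree_mul _ _).trans ?_
      rw [totalDegree_X]
      exact ht h
  have hEm1 : Ev E (-1 : MvPoly n) = -1 := by
    rw [show ((-1 : MvPoly n)) = (-1 : ℝ) • (1 : MvPoly n) by simp,
      Ev_smul E _ (mem_M_of_deg (by rw [totalDegree_one]; exact Nat.zero_le _)),
      Ev_one hE]
    ring
  rw [Ev_sub E (mem_M_of_deg (by rw [deg_neg_one]; exact Nat.zero_le _))
      (mem_M_of_deg htXdeg), hEm1] at h0
  have htX0 : Ev E (t * X v₀) = 0 := by
    by_cases h : t = 0
    · rw [h, zero_mul, Ev_zero]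
    · have hdegt := ht h
      have hmem : ∀ μ ∈ t.support,
          (t.coeff μ • (monomial μ (1 : ℝ) * X v₀) : MvPoly n)
            ∈ restrictTotalDegree (Fin n ⊕ Fin n) ℝ D := by
        intro μ hμ
        refine mem_M_of_deg ((totalDegree_smul_le _ _).trans ?_)
        refine (totalDegree_mul _ _).trans ?_
        rw [totalDegree_monomial μ (one_ne_zero (α := ℝ)), totalDegree_X]
        have := le_totalDegree hμ
        omega
      have hrw : t * X v₀ = ∑ μ ∈ t.support,
          t.coeff μ • (monomial μ (1 : ℝ) * X v₀) := by
        conv_lhs => rw [t.as_sum]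
        rw [Finset.sum_mul]
        refine Finset.sum_congr rfl fun μ hμ => ?_
        rw [← smul_mul_assoc, smul_monomial, smul_eq_mul, mul_one]
      rw [hrw, Ev_sum E _ _ hmem]
      refine Finset.sum_eq_zero fun μ hμ => ?_
      rw [Ev_smul E _ (mem_M_of_deg (by
        refine (totalDegree_mul _ _).trans ?_
        rw [totalDegree_monomial μ (one_ne_zero (α := ℝ)), totalDegree_X]
        have := le_totalDegree hμ
        omega))]
      rw [mono_zero hDd hd hE v₀ hX0 μ (by
        have := le_totalDegree hμ
        omega), mul_zero]
  linarith

end Statement6Aux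
/-- **Lemma 6.** With `Q₀`, `Q₁` and `c'` as in the unrestricting lemma: if `Q₀`
(resp. `Q₁`) has a mod-`c'` degree-`2d` refutation of product-width at most `w`,
then `E(xᵢ) > 0` (resp. `E(x̄ᵢ) > 0`) for every `E ∈ ℰ^c_{w,2d}(Q)`. -/
theorem statement6 (n d w : ℕ) (hn : 0 < n) (hd : 0 < d) (hw : 0 < w) (ℓ m : ℕ)
    (q : Fin ℓ → MvPoly n) (p : Fin m → MvPoly n)
    (c : Finset (Fin ℓ) ⊕ Fin m → ℕ) (hc : IsCutoff q p c) (i : Fin n)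
    (p0 p1 : Fin (m + 1) → MvPoly n)
    (hp0 : p0 = Fin.snoc p (X (Sum.inl i))) (hp1 : p1 = Fin.snoc p (X (Sum.inr i)))
    (c' : Finset (Fin ℓ) ⊕ Fin (m + 1) → ℕ)
    (hc'l : ∀ J : Finset (Fin ℓ), c' (Sum.inl J) = c (Sum.inl J))
    (hc'r : ∀ j : Fin m, c' (Sum.inr j.castSucc) = c (Sum.inr j))
    (hc'new : c' (Sum.inr (Fin.last m)) = 1) :
    (((-1 : MvPoly n) ∈ PScone n ℓ (m + 1) q p0 c' w (2 * d)) →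
      ∀ E ∈ PseudoExp n ℓ m q p c w (2 * d),
        ∀ xP : restrictTotalDegree (Fin n ⊕ Fin n) ℝ (2 * d),
          (xP : MvPoly n) = X (Sum.inl i) → 0 < E xP) ∧
    (((-1 : MvPoly n) ∈ PScone n ℓ (m + 1) q p1 c' w (2 * d)) →
      ∀ E ∈ PseudoExp n ℓ m q p c w (2 * d),
        ∀ xP : restrictTotalDegree (Fin n ⊕ Fin n) ℝ (2 * d),
          (xP : MvPoly n) = X (Sum.inr i) → 0 < E xP) := by
  
  constructor
  · intro href E hE xP hxP
    subst hp0
    have hmain := Statement6Aux.main (D := 2 * d) rfl hd (Sum.inl i) hc'l hc'r hc'new href hE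
    have hmem : (X (Sum.inl i) : MvPoly n) ∈ restrictTotalDegree (Fin n ⊕ Fin n) ℝ (2 * d) :=
      Statement6Aux.mem_M_of_deg (by rw [totalDegree_X]; omega)
    have hxP' : xP = ⟨X (Sum.inl i), hmem⟩ := Subtype.ext hxP
    rw [hxP']
    rwa [Statement6Aux.Ev_of_mem E hmem] at hmain
  · intro href E hE xP hxP
    subst hp1
    have hmain := Statement6Aux.main (D := 2 * d) rfl hd (Sum.inr i) hc'l hc'r hc'new href hE
    have hmem : (X (Sum.inr i) : MvPoly n) ∈ restrictTotalDegree (Fin n ⊕ Fin n) ℝ (2 * d) :=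
      Statement6Aux.mem_M_of_deg (by rw [totalDegree_X]; omega)
    have hxP' : xP = ⟨X (Sum.inr i), hmem⟩ := Subtype.ext hxP
    rw [hxP']
    rwa [Statement6Aux.Ev_of_mem E hmem] at hmain
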